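/- If D is a digraph in which every vertex has indegree 1 and outdegree 1 (a disjoint union of directed cycles), and D has at least one arc, then ndi(D) = 2: there is a 2-colouring of the arcs, proper at every vertex, such that for every arc uv the ordered pairs (S^+(u),S^-(u)) and (S^+(v),S^-(v)) differ, and no such 1-colouring exists. -/
import Mathlib


open Finset

section Defs

variable {V : Type*}

/-- A (proper) arc-colouring: arcs sharing a tail, or sharing a head, get distinct colours. -/
def ProperArc (A : V → V → Prop) (γ : V → V → ℕ) : Prop :=
  (∀ u v w, A u v → A u w → v ≠ w → γ u v ≠ γ u w) ∧
  (∀ u v w, A u v → A w v → u ≠ w → γ u v ≠ γ w v)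

/-- Colours appearing on outgoing arcs of `u`. -/
def outColors (A : V → V → Prop) (γ : V → V → ℕ) (u : V) : Set ℕ :=
  {c | ∃ v, A u v ∧ γ u v = c}

/-- Colours appearing on incoming arcs of `u`. -/
def inColors (A : V → V → Prop) (γ : V → V → ℕ) (u : V) : Set ℕ :=
  {c | ∃ v, A v u ∧ γ v u = c}

/-- `u` and `v` are distinguished by `γ`. -/
def Distinguished (A : V → V → Prop) (γ : V → V → ℕ) (u v : V) : Prop :=
  (outColors A γ u, inColors A γ u) ≠ (outColors A γ v, inColors A γ v)

/-- Neighbour-distinguishing arc-colouring. -/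
def NDArc (A : V → V → Prop) (γ : V → V → ℕ) : Prop :=
  ∀ u v, A u v → Distinguished A γ u v

/-- `D` has a neighbour-distinguishing proper arc-colouring with `k` colours. -/
def HasNDColoring (A : V → V → Prop) (k : ℕ) : Prop :=
  ∃ γ : V → V → ℕ, (∀ u v, A u v → γ u v < k) ∧ ProperArc A γ ∧ NDArc A γ

/-- `D` has a proper arc-colouring with `k` colours. -/
def HasProperColoring (A : V → V → Prop) (k : ℕ) : Prop :=
  ∃ γ : V → V → ℕ, (∀ u v, A u v → γ u v < k) ∧ ProperArc A γ

/-- Outdegree of `u`. -/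
def outDeg [Fintype V] (A : V → V → Prop) [DecidableRel A] (u : V) : ℕ :=
  (Finset.univ.filter fun v => A u v).card

/-- Indegree of `u`. -/
def inDeg [Fintype V] (A : V → V → Prop) [DecidableRel A] (u : V) : ℕ :=
  (Finset.univ.filter fun v => A v u).card

/-- Δ*(D) = max{Δ⁺(D), Δ⁻(D)}. -/
def maxDeg [Fintype V] (A : V → V → Prop) [DecidableRel A] : ℕ :=
  max (Finset.univ.sup (outDeg A)) (Finset.univ.sup (inDeg A))

end Defs

/-- A nonempty disjoint union of directed cycles has ndi = 2. -/
theorem stmt6 {V : Type*} (A : V → V → Prop) (hirr : Irreflexive A)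
    (hout : ∀ u, ∃! v, A u v) (hin : ∀ u, ∃! v, A v u)
    (hne : ∃ u v, A u v) :
    HasNDColoring A 2 ∧ ¬ HasNDColoring A 1 := by
  classical
  -- successor and predecessor functions
  obtain ⟨f, hf⟩ : ∃ f : V → V, ∀ u, A u (f u) ∧ ∀ w, A u w → w = f u := by
    refine ⟨fun u => (hout u).choose, fun u => ⟨(hout u).choose_spec.1, fun w hw => (hout u).choose_spec.2 w hw⟩⟩
  obtain ⟨g, hg⟩ : ∃ g : V → V, ∀ u, A (g u) u ∧ ∀ w, A w u → w = g u := by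
    refine ⟨fun u => (hin u).choose, fun u => ⟨(hin u).choose_spec.1, fun w hw => (hin u).choose_spec.2 w hw⟩⟩
  have hgf : ∀ u, g (f u) = u := fun u => ((hg (f u)).2 u (hf u).1).symm
  have hfg : ∀ u, f (g u) = u := fun u => ((hf (g u)).2 u (hg u).1).symm
  have hfne : ∀ u, f u ≠ u := by
    intro u h
    have := (hf u).1
    rw [h] at this
    exact hirr u this
  -- any colouring is proper
  have hproper : ∀ γ : V → V → ℕ, ProperArc A γ := by
    intro γ
    constructor
    · intro u v w huv huw hvw
      exact absurd (((hf u).2 v huv).trans ((hf u).2 w huw).symm) hvw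
    · intro u v w huv hwv huw
      exact absurd (((hg v).2 u huv).trans ((hg v).2 w hwv).symm) huw
  have hout' : ∀ (γ : V → V → ℕ) u, outColors A γ u = {γ u (f u)} := by
    intro γ u
    ext c
    simp only [outColors, Set.mem_setOf_eq, Set.mem_singleton_iff]
    constructor
    · rintro ⟨v, hv, rfl⟩; rw [(hf u).2 v hv]
    · rintro rfl; exact ⟨f u, (hf u).1, rfl⟩
  have hin' : ∀ (γ : V → V → ℕ) u, inColors A γ u = {γ (g u) u} := by
    intro γ u
    ext c
    simp only [inColors, Set.mem_setOf_eq, Set.mem_singleton_iff]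
    constructor
    · rintro ⟨v, hv, rfl⟩; rw [(hg u).2 v hv]
    · rintro rfl; exact ⟨g u, (hg u).1, rfl⟩
  constructor
  · -- maximal independent set via Zorn
    set Indep : Set (Set V) := {T | ∀ u ∈ T, f u ∉ T} with hIndep
    obtain ⟨T, hTmax⟩ : ∃ T, Maximal (· ∈ Indep) T := by
      apply zorn_subset
      intro c hcS hchain
      refine ⟨⋃₀ c, ?_, fun s hs => Set.subset_sUnion_of_mem hs⟩
      intro u hu hfu
      obtain ⟨s, hs, hus⟩ := hu
      obtain ⟨t, ht, hft⟩ := hfu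
      rcases hchain.total hs ht with h | h
      · exact hcS ht u (h hus) hft
      · exact hcS hs u hus (h hft)
    have hTind : ∀ u ∈ T, f u ∉ T := hTmax.1
    set c : V → ℕ := fun u => if u ∈ T then 1 else 0 with hc
    -- no three consecutive equal colours
    have key : ∀ w, ¬ (c w = c (f w) ∧ c (f w) = c (f (f w))) := by
      rintro w ⟨h1, h2⟩
      by_cases hw : w ∈ T
      · have hfw : f w ∈ T := by
          by_contra hfw
          simp only [hc, if_pos hw, if_neg hfw] at h1
          exact one_ne_zero h1
        exact hTind w hw hfw
      · have hfw : f w ∉ T := by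
          intro hfw
          simp only [hc, if_pos hfw, if_neg hw] at h1
          exact one_ne_zero h1.symm
        have hffw : f (f w) ∉ T := by
          intro hffw
          simp only [hc, if_pos hffw, if_neg hfw] at h2
          exact one_ne_zero h2.symm
        -- T ∪ {f w} is independent, contradicting maximality
        have hbig : (insert (f w) T) ∈ Indep := by
          intro u hu hfu
          rcases hu with rfl | hu
          · rcases hfu with hfu | hfu
            · exact hfne (f w) hfu
            · exact hffw hfu
          · rcases hfu with hfu | hfu
            · have : u = w := by
                have := congrArg g hfu
                rwa [hgf, hgf] at this
              exact hw (this ▸ hu)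
            · exact hTind u hu hfu
        have := hTmax.2 hbig (Set.subset_insert _ _)
        exact hfw (this (Set.mem_insert _ _))
    refine ⟨fun u _ => c u, fun u v _ => ?_, hproper _, ?_⟩
    · simp only [hc]; split <;> omega
    · intro u v huv
      have hv : v = f u := (hf u).2 v huv
      subst hv
      intro hEq
      simp only [Prod.mk.injEq, hout', hin'] at hEq
      obtain ⟨h1, h2⟩ := hEq
      rw [Set.singleton_eq_singleton_iff] at h1 h2
      -- h1 : c u = c (f u), h2 : c (g u) = c u  (modulo the γ shape)
      refine key (g u) ⟨?_, ?_⟩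
      · rw [hfg]; rw [hgf] at h2; exact h2
      · rw [hfg]; exact h1
  · rintro ⟨γ, hlt, _, hnd⟩
    obtain ⟨u, v, huv⟩ := hne
    have hall : ∀ w, (outColors A γ w, inColors A γ w) = ({0}, {0}) := by
      intro w
      have h1 : γ w (f w) = 0 := Nat.lt_one_iff.mp (hlt _ _ (hf w).1)
      have h2 : γ (g w) w = 0 := Nat.lt_one_iff.mp (hlt _ _ (hg w).1)
      rw [hout', hin', h1, h2]
    exact hnd u v huv ((hall u).trans (hall v).symm)
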